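/- Representer theorem for distributional risk minimization: let H be a real Hilbert space, m_1, …, m_n ∈ H, ℓ : ℝⁿ → ℝ an arbitrary function, and Ω : [0, ∞) → ℝ a strictly monotonically increasing function. If f̂ ∈ H minimizes the functional J(f) := ℓ(⟨f, m_1⟩, …, ⟨f, m_n⟩) + Ω(‖f‖_H) over H, then f̂ lies in the linear span of {m_1, …, m_n}, i.e. f̂ = Σ_{i=1}^n α_i m_i for some α ∈ ℝⁿ. -/

import Mathlib

open MeasureTheory
open scoped RealInnerProductSpace

/-- **Representer theorem for distributional risk minimization:** if `fhat`
minimizes `J(f) = ℓ(⟪f, m₁⟫, …, ⟪f, mₙ⟫) + Ω(‖f‖)` over a Hilbert space `H`,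
where `Ω` is strictly monotonically increasing on `[0, ∞)`, then `fhat` lies in
the span of the mean embeddings `m₁, …, mₙ`: `fhat = Σᵢ αᵢ mᵢ`. -/
theorem representer_theorem_distributional_risk
    {H : Type*} [NormedAddCommGroup H] [InnerProductSpace ℝ H] [CompleteSpace H]
    (n : ℕ) (m : Fin n → H) (ℓ : (Fin n → ℝ) → ℝ)
    (Ω : ℝ → ℝ) (hΩ : StrictMonoOn Ω (Set.Ici 0))
    (fhat : H)
    (hmin : ∀ f : H,
      ℓ (fun i => ⟪fhat, m i⟫) + Ω ‖fhat‖ ≤ ℓ (fun i => ⟪f, m i⟫) + Ω ‖f‖) :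
    ∃ α : Fin n → ℝ, fhat = ∑ i, α i • m i := by
  set V : Submodule ℝ H := Submodule.span ℝ (Set.range m) with hV
  haveI : FiniteDimensional ℝ V := FiniteDimensional.span_of_finite ℝ (Set.finite_range m)
  haveI : CompleteSpace V := FiniteDimensional.complete ℝ V
  set v : H := (Submodule.orthogonalProjection V fhat : H) with hv
  have hvV : v ∈ V := (Submodule.orthogonalProjection V fhat).2
  have horth : fhat - v ∈ Vᗮ := Submodule.sub_starProjection_mem_orthogonal (K := V) fhat
  -- inner products agree
  have hinner : ∀ i, ⟪v, m i⟫ = ⟪fhat, m i⟫ := by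
    intro i
    have hmi : m i ∈ V := Submodule.subset_span ⟨i, rfl⟩
    have := horth (m i) hmi
    have h0 : ⟪fhat - v, m i⟫ = 0 := by
      rw [real_inner_comm]; exact this
    rw [inner_sub_left] at h0
    linarith
  -- norm comparison
  have hle : ‖v‖ ≤ ‖fhat‖ := by
    have := norm_inner_le_norm (𝕜 := ℝ) v fhat
    have hvf : ⟪v, fhat⟫ = ‖v‖ ^ 2 := by
      have h0 : ⟪v, fhat - v⟫ = 0 := horth v hvV
      rw [inner_sub_right] at h0
      have : ⟪v, fhat⟫ = ⟪v, v⟫ := by linarith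
      rw [this, real_inner_self_eq_norm_sq]
    nlinarith [norm_nonneg v, norm_nonneg fhat, abs_le.mp (abs_real_inner_le_norm v fhat)]
  have hge : ‖fhat‖ ≤ ‖v‖ := by
    by_contra h
    push_neg at h
    have hmin' := hmin v
    have hℓ : ℓ (fun i => ⟪v, m i⟫) = ℓ (fun i => ⟪fhat, m i⟫) := by
      congr 1; funext i; exact hinner i
    rw [hℓ] at hmin'
    have hΩlt : Ω ‖v‖ < Ω ‖fhat‖ := hΩ (norm_nonneg v) (norm_nonneg fhat) h
    linarith
  have heq : fhat = v := by
    have hnorm : ‖fhat‖ = ‖v‖ := le_antisymm hge hle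
    have hpyth : ‖fhat‖ ^ 2 = ‖v‖ ^ 2 + ‖fhat - v‖ ^ 2 := by
      have h0 : ⟪v, fhat - v⟫ = 0 := horth v hvV
      have := norm_add_sq_real v (fhat - v)
      simp only [h0] at this
      have hfv : v + (fhat - v) = fhat := by abel
      rw [hfv] at this
      linarith
    have h2 : ‖fhat - v‖ ^ 2 = 0 := by rw [hnorm] at hpyth; linarith
    have : ‖fhat - v‖ = 0 := by
      have := pow_eq_zero_iff (n := 2) (by norm_num) |>.mp h2
      exact this
    exact sub_eq_zero.mp (norm_eq_zero.mp this)
  have hmem : fhat ∈ V := heq ▸ hvV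
  rw [hV] at hmem
  obtain ⟨α, hα⟩ := (Submodule.mem_span_range_iff_exists_fun ℝ).mp hmem
  exact ⟨α, hα.symm⟩
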